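/- Suppose (μ₁⁽ⁿ⁾) and (μ₂⁽ⁿ⁾) are sequences of Borel probability measures on a Polish space Ξ equipped with a closed partial order (i.e. F = {(x,y) : x ≤ y} is closed in Ξ×Ξ), converging weakly to μ₁ and μ₂ respectively, and for each n there exists a coupling of μ₁⁽ⁿ⁾ and μ₂⁽ⁿ⁾ supported on F. Then there exists a coupling of μ₁ and μ₂ supported on F; i.e. stochastic dominance is preserved under weak limits. -/

import Mathlib

open MeasureTheory Filter Set Topology TopologicalSpace BoundedContinuousFunction
open scoped NNReal ENNReal

namespace Stmt15Aux

noncomputable section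

/-- Build a bounded continuous `ℝ≥0`-valued function from a continuous bounded one. -/
def ofNN {Ω : Type*} [TopologicalSpace Ω] (φ : Ω → ℝ≥0) (hc : Continuous φ) (C : ℝ≥0)
    (hb : ∀ x, φ x ≤ C) : Ω →ᵇ ℝ≥0 :=
  ⟨⟨φ, hc⟩, C, fun x y => by
    rw [NNReal.dist_eq, abs_sub_le_iff]
    have h1 : (φ x : ℝ) ≤ C := hb x
    have h2 : (φ y : ℝ) ≤ C := hb y
    have h3 : (0:ℝ) ≤ φ x := (φ x).coe_nonneg
    have h4 : (0:ℝ) ≤ φ y := (φ y).coe_nonneg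
    constructor <;> linarith⟩

@[simp] lemma ofNN_apply {Ω : Type*} [TopologicalSpace Ω] (φ : Ω → ℝ≥0) (hc : Continuous φ)
    (C : ℝ≥0) (hb : ∀ x, φ x ≤ C) (x : Ω) : ofNN φ hc C hb x = φ x := rfl

/-- a Urysohn-type separation by a bounded continuous `ℝ≥0`-valued function. -/
lemma exists_sep {Ω : Type*} [MetricSpace Ω] {s t : Set Ω} (hs : IsClosed s) (ht : IsClosed t)
    (hd : Disjoint s t) :
    ∃ g : Ω →ᵇ ℝ≥0, (∀ x ∈ s, g x = 0) ∧ (∀ x ∈ t, 1 ≤ g x) ∧ ∀ x, g x ≤ 1 := by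
  obtain ⟨f, hf0, hf1, hf01⟩ := exists_continuous_zero_one_of_isClosed hs ht hd
  refine ⟨ofNN (fun x => Real.toNNReal (f x)) (continuous_real_toNNReal.comp f.continuous) 1
      (fun x => ?_), fun x hx => ?_, fun x hx => ?_, fun x => ?_⟩
  · simpa using Real.toNNReal_mono (hf01 x).2
  · show Real.toNNReal (f x) = 0
    rw [(by simpa using hf0 hx : f x = 0)]
    simp
  · simp only [ofNN_apply]
    rw [(by simpa using hf1 hx : f x = 1)]
    simp
  · simpa using Real.toNNReal_mono (hf01 x).2

lemma bcf_apply_le {Ω : Type*} [TopologicalSpace Ω] (f : Ω →ᵇ ℝ≥0) (x : Ω) :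
    f x ≤ nndist f 0 := by
  have h := BoundedContinuousFunction.dist_coe_le_dist (f := f) (g := 0) x
  have h0 : dist (f x) ((0 : Ω →ᵇ ℝ≥0) x) = ((f x : ℝ)) := by
    simp [NNReal.dist_eq]
  rw [h0] at h
  have h2 : (f x : ℝ) ≤ (nndist f 0 : ℝ) := by rw [← dist_nndist]; exact h
  exact_mod_cast h2

/-- product of a bounded continuous `ℝ≥0` function with one bounded by 1. -/
def mul01 {Ω : Type*} [TopologicalSpace Ω] (f g : Ω →ᵇ ℝ≥0) (hg : ∀ x, g x ≤ 1) : Ω →ᵇ ℝ≥0 :=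
  ofNN (fun x => f x * g x) (f.continuous.mul g.continuous) (nndist f 0)
    (fun x => by
      calc f x * g x ≤ nndist f 0 * 1 := mul_le_mul' (bcf_apply_le f x) (hg x)
      _ = nndist f 0 := mul_one _)

@[simp] lemma mul01_apply {Ω : Type*} [TopologicalSpace Ω] (f g : Ω →ᵇ ℝ≥0) (hg : ∀ x, g x ≤ 1)
    (x : Ω) : mul01 f g hg x = f x * g x := rfl

variable {X : Type*} [MetricSpace X] [MeasurableSpace X] [BorelSpace X]

lemma lintegral_le_of_le_one_of_zero_on {μ : Measure X} [IsProbabilityMeasure μ]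
    (g : X →ᵇ ℝ≥0) {C : Set X} (hC : MeasurableSet C) (h0 : ∀ x ∈ C, g x = 0)
    (h1 : ∀ x, g x ≤ 1) :
    ∫⁻ x, (g x : ℝ≥0∞) ∂μ ≤ μ Cᶜ := by
  calc ∫⁻ x, (g x : ℝ≥0∞) ∂μ ≤ ∫⁻ x, Cᶜ.indicator (fun _ => (1:ℝ≥0∞)) x ∂μ := by
        refine lintegral_mono fun x => ?_
        by_cases hx : x ∈ C
        · simp [h0 x hx, Set.indicator]
        · simp only [Set.indicator_of_mem (Set.mem_compl hx)]
          exact_mod_cast h1 x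
    _ = μ Cᶜ := lintegral_indicator_one hC.compl

/-- The main limit construction: from a tight sequence of probability measures, produce a
probability measure bounded on open sets by compact-approximable `𝒰`-limsups. -/
theorem exists_weak_limit (ν : ℕ → ProbabilityMeasure X) (𝒰 : Ultrafilter ℕ)
    (htight : ∀ ε : ℝ≥0∞, 0 < ε → ∃ K : Set X, IsCompact K ∧ ∀ n, (ν n : Measure X) Kᶜ ≤ ε) :
    ∃ μ : Measure X, IsProbabilityMeasure μ ∧
      ∀ (U : Set X), IsOpen U → ∀ b : ℝ≥0∞,
        (∀ K : Set X, IsCompact K → K ⊆ U →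
          ∃ g : X →ᵇ ℝ≥0, (∀ x ∈ K, 1 ≤ g x) ∧
            limsup (fun n => ∫⁻ x, (g x : ℝ≥0∞) ∂(ν n : Measure X)) 𝒰 ≤ b) →
        μ U ≤ b := by
  classical
  -- the limit functional along the ultrafilter
  have hexL : ∀ f : X →ᵇ ℝ≥0, ∃ a : ℝ≥0∞,
      Tendsto (fun n => ∫⁻ x, (f x : ℝ≥0∞) ∂(ν n : Measure X)) 𝒰 (𝓝 a) := by
    intro f
    obtain ⟨a, -, ha⟩ := isCompact_univ.ultrafilter_le_nhds
      (𝒰.map fun n => ∫⁻ x, (f x : ℝ≥0∞) ∂(ν n : Measure X)) (by simp)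
    exact ⟨a, ha⟩
  choose L hL using hexL
  have hmeas : ∀ f : X →ᵇ ℝ≥0, Measurable fun x => (f x : ℝ≥0∞) := fun f =>
    measurable_coe_nnreal_ennreal.comp f.continuous.measurable
  have hint_le : ∀ (f : X →ᵇ ℝ≥0) (n : ℕ),
      ∫⁻ x, (f x : ℝ≥0∞) ∂(ν n : Measure X) ≤ (nndist f 0 : ℝ≥0∞) := by
    intro f n
    calc ∫⁻ x, (f x : ℝ≥0∞) ∂(ν n : Measure X)
        ≤ ∫⁻ _, (nndist f 0 : ℝ≥0∞) ∂(ν n : Measure X) :=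
          lintegral_mono fun x => ENNReal.coe_le_coe.mpr (bcf_apply_le f x)
      _ = (nndist f 0 : ℝ≥0∞) := by simp
  have hLbound : ∀ f : X →ᵇ ℝ≥0, L f ≤ (nndist f 0 : ℝ≥0∞) := fun f =>
    le_of_tendsto (hL f) (Eventually.of_forall (hint_le f))
  have hLne : ∀ f : X →ᵇ ℝ≥0, L f ≠ ∞ := fun f =>
    ((hLbound f).trans_lt ENNReal.coe_lt_top).ne
  have hLone : L 1 = 1 := by
    refine tendsto_nhds_unique (hL 1) ?_
    have heq1 : (fun n => ∫⁻ x, ((1 : X →ᵇ ℝ≥0) x : ℝ≥0∞) ∂(ν n : Measure X))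
        = fun _ => (1:ℝ≥0∞) := by
      funext n; simp
    rw [heq1]
    exact tendsto_const_nhds
  have hLmono : ∀ f g : X →ᵇ ℝ≥0, (∀ x, f x ≤ g x) → L f ≤ L g := fun f g h =>
    le_of_tendsto_of_tendsto' (hL f) (hL g)
      (fun n => lintegral_mono fun x => ENNReal.coe_le_coe.mpr (h x))
  have hLadd : ∀ f g : X →ᵇ ℝ≥0, L (f + g) = L f + L g := by
    intro f g
    refine tendsto_nhds_unique (hL (f + g)) ?_
    have heq : (fun n => ∫⁻ x, ((f + g) x : ℝ≥0∞) ∂(ν n : Measure X)) =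
        fun n => (∫⁻ x, (f x : ℝ≥0∞) ∂(ν n : Measure X)) +
          ∫⁻ x, (g x : ℝ≥0∞) ∂(ν n : Measure X) := by
      funext n
      rw [← lintegral_add_left (hmeas f)]
      refine lintegral_congr fun x => ?_
      push_cast
      rfl
    rw [heq]
    exact ((hL f).add (hL g))
  -- the content
  set lam : Compacts X → ℝ≥0∞ :=
    fun K => ⨅ (f : X →ᵇ ℝ≥0) (_ : ∀ x ∈ (K : Set X), 1 ≤ f x), L f with hlam
  have lam_le : ∀ (K : Compacts X) (f : X →ᵇ ℝ≥0), (∀ x ∈ (K : Set X), 1 ≤ f x) →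
      lam K ≤ L f := fun K f hf => iInf₂_le f hf
  have lam_le_one : ∀ K : Compacts X, lam K ≤ 1 := fun K => by
    simpa [hLone] using lam_le K 1 (by simp)
  have lam_ne_top : ∀ K : Compacts X, lam K ≠ ∞ := fun K =>
    ((lam_le_one K).trans_lt ENNReal.one_lt_top).ne
  have lam_mono : ∀ K₁ K₂ : Compacts X, (K₁ : Set X) ⊆ K₂ → lam K₁ ≤ lam K₂ := by
    intro K₁ K₂ h
    exact le_iInf₂ fun f hf => lam_le K₁ f fun x hx => hf x (h hx)
  have lam_sup_le : ∀ K₁ K₂ : Compacts X, lam (K₁ ⊔ K₂) ≤ lam K₁ + lam K₂ := by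
    intro K₁ K₂
    refine ENNReal.le_of_forall_pos_le_add fun ε hε _ => ?_
    have hhalf : (0:ℝ≥0∞) < (ε : ℝ≥0∞) / 2 := by
      simp [ENNReal.div_pos_iff, hε.ne']
    have hex : ∀ K : Compacts X, ∃ f : X →ᵇ ℝ≥0, (∀ x ∈ (K : Set X), 1 ≤ f x) ∧
        L f ≤ lam K + (ε : ℝ≥0∞) / 2 := by
      intro K
      by_contra hcon
      push_neg at hcon
      have : lam K + (ε : ℝ≥0∞) / 2 ≤ lam K :=
        le_iInf₂ fun f hf => (hcon f hf).le
      exact absurd this (not_le.mpr (ENNReal.lt_add_right (lam_ne_top K) hhalf.ne'))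
    obtain ⟨f₁, hf₁, hLf₁⟩ := hex K₁
    obtain ⟨f₂, hf₂, hLf₂⟩ := hex K₂
    have hadm : ∀ x ∈ ((K₁ ⊔ K₂ : Compacts X) : Set X), 1 ≤ (f₁ + f₂) x := by
      intro x hx
      rcases hx with hx | hx
      · exact le_trans (hf₁ x hx) (by simp)
      · exact le_trans (hf₂ x hx) (by simp [le_add_left])
    calc lam (K₁ ⊔ K₂) ≤ L (f₁ + f₂) := lam_le _ _ hadm
      _ = L f₁ + L f₂ := hLadd f₁ f₂
      _ ≤ (lam K₁ + (ε : ℝ≥0∞) / 2) + (lam K₂ + (ε : ℝ≥0∞) / 2) := add_le_add hLf₁ hLf₂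
      _ = lam K₁ + lam K₂ + ε := by
          rw [add_add_add_comm, ENNReal.add_halves]
  have lam_sup_disjoint : ∀ K₁ K₂ : Compacts X, Disjoint (K₁ : Set X) K₂ →
      lam (K₁ ⊔ K₂) = lam K₁ + lam K₂ := by
    intro K₁ K₂ hd
    refine le_antisymm (lam_sup_le K₁ K₂) ?_
    refine le_iInf₂ fun f hf => ?_
    obtain ⟨g, hg0, hg1, hgle⟩ := exists_sep K₂.2.isClosed K₁.2.isClosed hd.symm
    have hhle : ∀ x, (1:ℝ≥0) - g x ≤ 1 := fun x => tsub_le_self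
    set h : X →ᵇ ℝ≥0 := ofNN (fun x => 1 - g x)
      (by exact (continuous_const.sub g.continuous)) 1 hhle with hh
    have hfg : mul01 f g hgle + mul01 f h (fun x => hhle x) = f := by
      ext x
      simp only [BoundedContinuousFunction.add_apply, mul01_apply, hh, ofNN_apply]
      push_cast [NNReal.coe_sub (hgle x)]
      ring
    have h1 : lam K₁ ≤ L (mul01 f g hgle) := by
      refine lam_le _ _ fun x hx => ?_
      show 1 ≤ f x * g x
      calc (1:ℝ≥0) = 1 * 1 := (one_mul 1).symm
        _ ≤ f x * g x := mul_le_mul' (hf x (Or.inl hx)) (hg1 x hx)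
    have h2 : lam K₂ ≤ L (mul01 f h (fun x => hhle x)) := by
      refine lam_le _ _ fun x hx => ?_
      show 1 ≤ f x * ((1:ℝ≥0) - g x)
      rw [hg0 x hx, tsub_zero, mul_one]
      exact hf x (Or.inr hx)
    calc lam K₁ + lam K₂ ≤ L (mul01 f g hgle) + L (mul01 f h (fun x => hhle x)) :=
          add_le_add h1 h2
      _ = L f := by rw [← hLadd, hfg]
  let c : Content X :=
    { toFun := fun K => (lam K).toNNReal
      mono' := fun K₁ K₂ h => ENNReal.toNNReal_mono (lam_ne_top K₂) (lam_mono K₁ K₂ h)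
      sup_disjoint' := fun K₁ K₂ hd _ _ => by
        have h := lam_sup_disjoint K₁ K₂ hd
        show (lam (K₁ ⊔ K₂)).toNNReal = (lam K₁).toNNReal + (lam K₂).toNNReal
        rw [h, ENNReal.toNNReal_add (lam_ne_top K₁) (lam_ne_top K₂)]
      sup_le' := fun K₁ K₂ => by
        have h := (lam_sup_le K₁ K₂).trans_eq
          (ENNReal.coe_toNNReal (by
            exact ENNReal.add_ne_top.mpr ⟨lam_ne_top K₁, lam_ne_top K₂⟩)).symm
        have := ENNReal.toNNReal_mono (by
            exact ENNReal.coe_ne_top) h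
        rwa [ENNReal.toNNReal_coe, ENNReal.toNNReal_add (lam_ne_top K₁) (lam_ne_top K₂)] at this }
  have hcK : ∀ K : Compacts X, (c K : ℝ≥0∞) = lam K := fun K =>
    ENNReal.coe_toNNReal (lam_ne_top K)
  set μ := c.measure with hμ
  have hopen : ∀ (U : Set X), IsOpen U →
      μ U = ⨆ (K : Compacts X) (_ : (K : Set X) ⊆ U), lam K := by
    intro U hU
    rw [hμ, c.measure_apply hU.measurableSet, c.outerMeasure_of_isOpen U hU]
    show ⨆ (K : Compacts X) (_ : (K : Set X) ⊆ U), (c K : ℝ≥0∞) = _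
    exact iSup_congr fun K => iSup_congr fun _ => hcK K
  have hμuniv : μ univ = 1 := by
    rw [hopen univ isOpen_univ]
    refine le_antisymm (iSup₂_le fun K _ => lam_le_one K) ?_
    refine ENNReal.le_of_forall_pos_le_add fun ε hε _ => ?_
    obtain ⟨K, hKc, hKb⟩ := htight ε (by exact_mod_cast hε)
    have h1 : (1:ℝ≥0∞) - ε ≤ lam ⟨K, hKc⟩ := by
      refine le_iInf₂ fun f hf => ?_
      refine ge_of_tendsto (hL f) (Eventually.of_forall fun n => ?_)
      have hK1 : (ν n : Measure X) K ≤ ∫⁻ x, (f x : ℝ≥0∞) ∂(ν n : Measure X) := by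
        rw [show (ν n : Measure X) K = ∫⁻ x, K.indicator (fun _ => (1:ℝ≥0∞)) x ∂(ν n : Measure X)
          from (lintegral_indicator_one hKc.measurableSet).symm]
        refine lintegral_mono fun x => ?_
        by_cases hx : x ∈ K
        · simp only [Set.indicator_of_mem hx]
          exact_mod_cast hf x hx
        · simp [Set.indicator_of_notMem hx]
      have hK2 : (1:ℝ≥0∞) - ε ≤ (ν n : Measure X) K := by
        rw [tsub_le_iff_right]
        calc (1:ℝ≥0∞) = (ν n : Measure X) (K ∪ Kᶜ) := by simp
          _ ≤ (ν n : Measure X) K + (ν n : Measure X) Kᶜ := measure_union_le K Kᶜ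
          _ ≤ (ν n : Measure X) K + ε := add_le_add_right (hKb n) _
      exact hK2.trans hK1
    calc (1:ℝ≥0∞) ≤ (1 - (ε:ℝ≥0∞)) + ε := le_tsub_add
      _ ≤ (⨆ (K : Compacts X) (_ : (K : Set X) ⊆ univ), lam K) + ε := by
          refine add_le_add_left ?_ _
          exact h1.trans (le_iSup₂ (f := fun (K : Compacts X) (_ : (K:Set X) ⊆ univ) => lam K)
            ⟨K, hKc⟩ (subset_univ K))
  refine ⟨μ, ⟨hμuniv⟩, ?_⟩
  intro U hU b hb
  rw [hopen U hU]
  refine iSup₂_le fun K hKU => ?_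
  obtain ⟨g, hg1, hglim⟩ := hb K K.2 hKU
  have := lam_le K g hg1
  refine this.trans ?_
  rw [← (hL g).limsup_eq]
  exact hglim


/-- Probability measures agreeing (≤) on closed sets agree. -/
theorem ext_of_le_closed {Ω : Type*} [MetricSpace Ω] [MeasurableSpace Ω] [BorelSpace Ω]
    {ρ₁ ρ₂ : Measure Ω} [IsProbabilityMeasure ρ₁] [IsProbabilityMeasure ρ₂]
    (h : ∀ C : Set Ω, IsClosed C → ρ₁ C ≤ ρ₂ C) : ρ₁ = ρ₂ := by
  have hopen : ∀ U : Set Ω, IsOpen U → ρ₂ U ≤ ρ₁ U := by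
    intro U hU
    have h1 := h Uᶜ hU.isClosed_compl
    rw [prob_compl_eq_one_sub hU.measurableSet, prob_compl_eq_one_sub hU.measurableSet] at h1
    have h2 := tsub_le_tsub_left h1 (1:ℝ≥0∞)
    rwa [ENNReal.sub_sub_cancel ENNReal.one_ne_top prob_le_one,
      ENNReal.sub_sub_cancel ENNReal.one_ne_top prob_le_one] at h2
  have hclosed_eq : ∀ C : Set Ω, IsClosed C → ρ₁ C = ρ₂ C := by
    intro C hC
    refine le_antisymm (h C hC) ?_
    calc ρ₂ C = ⨅ (U : Set Ω) (_ : C ⊆ U) (_ : IsOpen U), ρ₂ U := measure_eq_iInf_isOpen C ρ₂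
      _ ≤ ⨅ (U : Set Ω) (_ : C ⊆ U) (_ : IsOpen U), ρ₁ U :=
          iInf_mono fun U => iInf_mono fun _ => iInf_mono fun hUo => hopen U hUo
      _ = ρ₁ C := (measure_eq_iInf_isOpen C ρ₁).symm
  refine ext_of_generate_finite _ ?_ isPiSystem_isClosed (fun s hs => hclosed_eq s hs) (by simp)
  rw [BorelSpace.measurable_eq (α := Ω), borel_eq_generateFrom_isClosed]

/-- A weakly convergent sequence of probability measures on a Polish space is uniformly tight. -/
theorem tight_of_tendsto {Ω : Type*} [MetricSpace Ω] [SeparableSpace Ω] [CompleteSpace Ω]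
    [MeasurableSpace Ω] [BorelSpace Ω]
    (μs : ℕ → ProbabilityMeasure Ω) (μ : ProbabilityMeasure Ω)
    (h : Tendsto μs atTop (𝓝 μ)) {ε : ℝ≥0∞} (hε : 0 < ε) :
    ∃ K : Set Ω, IsCompact K ∧ ∀ n, (μs n : Measure Ω) Kᶜ ≤ ε := by
  classical
  have hne : Nonempty Ω := by
    by_contra hcon
    rw [not_nonempty_iff] at hcon
    have h1 : (μ : Measure Ω) univ = 1 := measure_univ
    rw [Set.univ_eq_empty_iff.mpr hcon, measure_empty] at h1
    exact zero_ne_one h1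
  obtain ⟨u, hu⟩ := exists_dense_seq Ω
  have key : ∀ r : ℝ, 0 < r → ∀ δ : ℝ≥0∞, 0 < δ → ∃ m : ℕ, ∀ n,
      (μs n : Measure Ω) (⋃ i ∈ Finset.range m, Metric.ball (u i) r)ᶜ ≤ δ := by
    intro r hr δ hδ
    set V : ℕ → Set Ω := fun m => ⋃ i ∈ Finset.range m, Metric.ball (u i) r with hV
    have hVopen : ∀ m, IsOpen (V m) := fun m => isOpen_biUnion fun i _ => Metric.isOpen_ball
    have hVmono : Monotone V := by
      intro a b hab
      refine Set.biUnion_subset_biUnion_left ?_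
      intro i hi
      exact Finset.mem_range.mpr (lt_of_lt_of_le (Finset.mem_range.mp hi) hab)
    have hVuniv : ⋃ m, V m = univ := by
      ext x
      simp only [mem_iUnion, mem_univ, iff_true]
      obtain ⟨i, hi⟩ := hu.exists_dist_lt x hr
      refine ⟨i + 1, Set.mem_biUnion (Finset.self_mem_range_succ i) ?_⟩
      rw [Metric.mem_ball]
      exact hi
    have hconv : ∀ ρ : ProbabilityMeasure Ω,
        Tendsto (fun m => (ρ : Measure Ω) (V m)) atTop (𝓝 1) := by
      intro ρ
      have h2 := tendsto_measure_iUnion_atTop (μ := (ρ : Measure Ω)) hVmono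
      rwa [hVuniv, measure_univ] at h2
    have hhalfne : δ / 2 ≠ 0 := by
      simp only [ne_eq, ENNReal.div_eq_zero_iff, hδ.ne', false_or]
      norm_num
    have hlt1 : (1:ℝ≥0∞) - δ/2 < 1 := ENNReal.sub_lt_self ENNReal.one_ne_top one_ne_zero hhalfne
    have hcompl : ∀ (ρ : ProbabilityMeasure Ω) (m : ℕ),
        1 - δ/2 < (ρ : Measure Ω) (V m) → (ρ : Measure Ω) (V m)ᶜ ≤ δ := by
      intro ρ m hm
      rw [prob_compl_eq_one_sub (hVopen m).measurableSet]
      calc (1:ℝ≥0∞) - (ρ : Measure Ω) (V m) ≤ 1 - (1 - δ/2) := tsub_le_tsub_left hm.le 1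
        _ ≤ δ/2 := by
            rw [tsub_le_iff_right, add_comm]
            exact le_tsub_add
        _ ≤ δ := ENNReal.half_le_self
    obtain ⟨m₀, hm₀⟩ : ∃ m₀, 1 - δ/2 < (μ : Measure Ω) (V m₀) :=
      ((hconv μ).eventually (eventually_gt_nhds hlt1)).exists
    have hlim : (μ : Measure Ω) (V m₀) ≤ liminf (fun n => (μs n : Measure Ω) (V m₀)) atTop :=
      ProbabilityMeasure.le_liminf_measure_open_of_tendsto h (hVopen m₀)
    have hev : ∀ᶠ n in atTop, 1 - δ/2 < (μs n : Measure Ω) (V m₀) :=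
      eventually_lt_of_lt_liminf (lt_of_lt_of_le hm₀ hlim)
    obtain ⟨N, hN⟩ := eventually_atTop.mp hev
    have hind : ∀ n, ∃ m, 1 - δ/2 < (μs n : Measure Ω) (V m) := fun n =>
      ((hconv (μs n)).eventually (eventually_gt_nhds hlt1)).exists
    choose mi hmi using hind
    refine ⟨max m₀ ((Finset.range N).sup mi), fun n => ?_⟩
    rcases le_or_gt N n with hn | hn
    · refine hcompl (μs n) _ (lt_of_lt_of_le (hN n hn) (measure_mono (hVmono ?_)))
      exact le_max_left _ _
    · refine hcompl (μs n) _ (lt_of_lt_of_le (hmi n) (measure_mono (hVmono ?_)))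
      exact le_trans (Finset.le_sup (Finset.mem_range.mpr hn)) (le_max_right _ _)
  have hδj : ∀ j : ℕ, (0:ℝ≥0∞) < ε / 2 * (2:ℝ≥0∞)⁻¹ ^ j := by
    intro j
    apply ENNReal.mul_pos
    · exact (ENNReal.half_pos hε.ne').ne'
    · exact (ENNReal.pow_pos (by norm_num) j).ne'
  have hrj : ∀ j : ℕ, (0:ℝ) < 1 / (j + 1) := fun j => by positivity
  have hjm : ∀ j : ℕ, ∃ m : ℕ, ∀ n,
      (μs n : Measure Ω) (⋃ i ∈ Finset.range m, Metric.ball (u i) (1/(j+1)))ᶜ ≤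
        ε / 2 * (2:ℝ≥0∞)⁻¹ ^ j := fun j => key _ (hrj j) _ (hδj j)
  choose mj hmj using hjm
  set W : ℕ → Set Ω := fun j => ⋃ i ∈ Finset.range (mj j), Metric.ball (u i) (1/(j+1)) with hW
  refine ⟨⋂ j, closure (W j), ?_, ?_⟩
  · refine TotallyBounded.isCompact_of_isClosed ?_ (isClosed_iInter fun j => isClosed_closure)
    rw [Metric.totallyBounded_iff]
    intro ε' hε'
    obtain ⟨j, hj⟩ := exists_nat_one_div_lt hε'
    refine ⟨u '' ↑(Finset.range (mj j)), (Finset.range (mj j)).finite_toSet.image u, ?_⟩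
    intro x hx
    have hx1 : x ∈ closure (W j) := mem_iInter.mp hx j
    have hsubj : closure (W j) ⊆ ⋃ i ∈ Finset.range (mj j), Metric.closedBall (u i) (1/(j+1)) := by
      have h3 : closure (⋃ i ∈ Finset.range (mj j), Metric.ball (u i) (1/((j:ℝ)+1))) ⊆
          ⋃ i ∈ Finset.range (mj j), Metric.closedBall (u i) (1/((j:ℝ)+1)) := by
        rw [Finset.closure_biUnion]
        exact Set.iUnion₂_mono fun i _ => Metric.closure_ball_subset_closedBall
      exact h3
    have hx2 := hsubj hx1
    obtain ⟨i, hi, hxi⟩ := Set.mem_iUnion₂.mp hx2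
    refine Set.mem_biUnion (Set.mem_image_of_mem u (Finset.mem_coe.mpr hi)) ?_
    rw [Metric.mem_ball]
    calc dist x (u i) ≤ 1/(j+1) := Metric.mem_closedBall.mp hxi
      _ < ε' := hj
  · intro n
    have hsub : (⋂ j, closure (W j))ᶜ ⊆ ⋃ j, (closure (W j))ᶜ := by
      rw [Set.compl_iInter]
    calc (μs n : Measure Ω) (⋂ j, closure (W j))ᶜ
        ≤ ∑' j, (μs n : Measure Ω) (closure (W j))ᶜ :=
          (measure_mono hsub).trans (measure_iUnion_le _)
      _ ≤ ∑' j, ε / 2 * (2:ℝ≥0∞)⁻¹ ^ j := by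
          refine ENNReal.tsum_le_tsum fun j => ?_
          refine le_trans (measure_mono ?_) (hmj j n)
          exact compl_subset_compl.mpr subset_closure
      _ = ε / 2 * 2 := by
          rw [ENNReal.tsum_mul_left, ENNReal.tsum_geometric, ENNReal.one_sub_inv_two,
            inv_inv]
      _ ≤ ε := by
          rw [ENNReal.div_mul_cancel (by norm_num) (by norm_num)]

end

end Stmt15Aux

/-- Stochastic dominance is preserved under weak limits: if `Ξ` is Polish with a closed
relation `F ⊆ Ξ × Ξ` (e.g. the graph of a closed partial order), `μ₁⁽ⁿ⁾ → μ₁` and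
`μ₂⁽ⁿ⁾ → μ₂` weakly, and each pair `(μ₁⁽ⁿ⁾, μ₂⁽ⁿ⁾)` admits a coupling supported on `F`,
then `μ₁` and `μ₂` admit a coupling supported on `F`. -/
theorem stmt_15 {Ξ : Type*} [MetricSpace Ξ] [TopologicalSpace.SeparableSpace Ξ] [CompleteSpace Ξ]
    [MeasurableSpace Ξ] [BorelSpace Ξ]
    (F : Set (Ξ × Ξ)) (hF : IsClosed F)
    (μ₁ μ₂ : ProbabilityMeasure Ξ) (μ₁n μ₂n : ℕ → ProbabilityMeasure Ξ)
    (h₁ : Tendsto μ₁n atTop (nhds μ₁)) (h₂ : Tendsto μ₂n atTop (nhds μ₂))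
    (hc : ∀ n : ℕ, ∃ ν : ProbabilityMeasure (Ξ × Ξ),
      (ν : Measure (Ξ × Ξ)).map Prod.fst = (μ₁n n : Measure Ξ) ∧
      (ν : Measure (Ξ × Ξ)).map Prod.snd = (μ₂n n : Measure Ξ) ∧
      (ν : Measure (Ξ × Ξ)) F = 1) :
    ∃ ν : ProbabilityMeasure (Ξ × Ξ),
      (ν : Measure (Ξ × Ξ)).map Prod.fst = (μ₁ : Measure Ξ) ∧
      (ν : Measure (Ξ × Ξ)).map Prod.snd = (μ₂ : Measure Ξ) ∧
      (ν : Measure (Ξ × Ξ)) F = 1 := by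
  classical
  haveI : SecondCountableTopology Ξ := UniformSpace.secondCountable_of_separable Ξ
  obtain ⟨νc, hνc⟩ := Classical.axiomOfChoice hc
  have hνc1 : ∀ n, (νc n : Measure (Ξ × Ξ)).map Prod.fst = (μ₁n n : Measure Ξ) := fun n =>
    (hνc n).1
  have hνc2 : ∀ n, (νc n : Measure (Ξ × Ξ)).map Prod.snd = (μ₂n n : Measure Ξ) := fun n =>
    (hνc n).2.1
  have hνcF : ∀ n, (νc n : Measure (Ξ × Ξ)) F = 1 := fun n => (hνc n).2.2
  set 𝒰 : Ultrafilter ℕ := Ultrafilter.of atTop with h𝒰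
  have h𝒰le : (𝒰 : Filter ℕ) ≤ atTop := Ultrafilter.of_le atTop
  -- uniform tightness of the couplings
  have htight : ∀ ε : ℝ≥0∞, 0 < ε → ∃ K : Set (Ξ × Ξ), IsCompact K ∧
      ∀ n, (νc n : Measure (Ξ × Ξ)) Kᶜ ≤ ε := by
    intro ε hε
    obtain ⟨K₁, hK₁c, hK₁⟩ := Stmt15Aux.tight_of_tendsto μ₁n μ₁ h₁ (ENNReal.half_pos hε.ne')
    obtain ⟨K₂, hK₂c, hK₂⟩ := Stmt15Aux.tight_of_tendsto μ₂n μ₂ h₂ (ENNReal.half_pos hε.ne')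
    refine ⟨K₁ ×ˢ K₂, hK₁c.prod hK₂c, fun n => ?_⟩
    have hsub : (K₁ ×ˢ K₂)ᶜ ⊆ (Prod.fst ⁻¹' K₁ᶜ) ∪ (Prod.snd ⁻¹' K₂ᶜ) := by
      intro x hx
      rcases not_and_or.mp (fun hmem => hx (Set.mem_prod.mpr hmem)) with h' | h'
      · exact Or.inl h'
      · exact Or.inr h'
    have e1 : (νc n : Measure (Ξ × Ξ)) (Prod.fst ⁻¹' K₁ᶜ) = (μ₁n n : Measure Ξ) K₁ᶜ := by
      rw [← hνc1 n, Measure.map_apply measurable_fst hK₁c.measurableSet.compl]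
    have e2 : (νc n : Measure (Ξ × Ξ)) (Prod.snd ⁻¹' K₂ᶜ) = (μ₂n n : Measure Ξ) K₂ᶜ := by
      rw [← hνc2 n, Measure.map_apply measurable_snd hK₂c.measurableSet.compl]
    calc (νc n : Measure (Ξ × Ξ)) (K₁ ×ˢ K₂)ᶜ
        ≤ (νc n : Measure (Ξ × Ξ)) ((Prod.fst ⁻¹' K₁ᶜ) ∪ (Prod.snd ⁻¹' K₂ᶜ)) :=
          measure_mono hsub
      _ ≤ (νc n : Measure (Ξ × Ξ)) (Prod.fst ⁻¹' K₁ᶜ) +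
          (νc n : Measure (Ξ × Ξ)) (Prod.snd ⁻¹' K₂ᶜ) := measure_union_le _ _
      _ ≤ ε / 2 + ε / 2 := by rw [e1, e2]; exact add_le_add (hK₁ n) (hK₂ n)
      _ = ε := ENNReal.add_halves ε
  obtain ⟨μ0, hμ0prob, hkey⟩ := Stmt15Aux.exists_weak_limit νc 𝒰 htight
  haveI := hμ0prob
  -- F has full limit mass
  have hFfull : μ0 F = 1 := by
    have hFc : μ0 Fᶜ ≤ 0 := by
      refine hkey Fᶜ hF.isOpen_compl 0 fun K hKcomp hKsub => ?_
      obtain ⟨g, hg0, hg1, hgle⟩ := Stmt15Aux.exists_sep hF hKcomp.isClosed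
        (Set.disjoint_left.mpr fun x hxF hxK => (hKsub hxK) hxF)
      refine ⟨g, hg1, ?_⟩
      have hzero : ∀ n, ∫⁻ x, (g x : ℝ≥0∞) ∂(νc n : Measure (Ξ × Ξ)) = 0 := by
        intro n
        have hb := Stmt15Aux.lintegral_le_of_le_one_of_zero_on
          (μ := (νc n : Measure (Ξ × Ξ))) g hF.measurableSet hg0 hgle
        have hFc0 : (νc n : Measure (Ξ × Ξ)) Fᶜ = 0 := by
          rw [prob_compl_eq_one_sub hF.measurableSet, hνcF n, tsub_self]
        exact le_antisymm (hFc0 ▸ hb) zero_le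
      have heq0 : (fun n => ∫⁻ x, (g x : ℝ≥0∞) ∂(νc n : Measure (Ξ × Ξ))) =
          fun _ => (0:ℝ≥0∞) := funext hzero
      rw [heq0]
      simp [limsup_const]
    have hle : μ0 Fᶜ = 0 := le_antisymm (by simpa using hFc) zero_le
    rw [prob_compl_eq_one_sub hF.measurableSet] at hle
    exact le_antisymm prob_le_one (tsub_eq_zero_iff_le.mp hle)
  -- identification of the marginals
  have hmar : ∀ (proj : Ξ × Ξ → Ξ), Continuous proj →
      ∀ (μlim : ProbabilityMeasure Ξ) (μseq : ℕ → ProbabilityMeasure Ξ),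
      Tendsto μseq atTop (𝓝 μlim) →
      (∀ n, (νc n : Measure (Ξ × Ξ)).map proj = (μseq n : Measure Ξ)) →
      μ0.map proj = (μlim : Measure Ξ) := by
    intro proj hproj μlim μseq hseq hmap
    haveI : IsProbabilityMeasure (μ0.map proj) :=
      Measure.isProbabilityMeasure_map hproj.measurable.aemeasurable
    refine (Stmt15Aux.ext_of_le_closed (ρ₁ := (μlim : Measure Ξ)) (ρ₂ := μ0.map proj) ?_).symm
    intro C₀ hC₀
    rw [Measure.map_apply hproj.measurable hC₀.measurableSet]
    have hCclosed : IsClosed (proj ⁻¹' C₀) := hC₀.preimage hproj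
    have hCc : μ0 (proj ⁻¹' C₀)ᶜ ≤ (μlim : Measure Ξ) C₀ᶜ := by
      refine hkey (proj ⁻¹' C₀)ᶜ hCclosed.isOpen_compl _ fun K hKcomp hKsub => ?_
      have hK₀ : IsCompact (proj '' K) := hKcomp.image hproj
      have hdisj : Disjoint C₀ (proj '' K) := by
        rw [Set.disjoint_right]
        rintro y ⟨x, hxK, rfl⟩ hyC₀
        exact (hKsub hxK) hyC₀
      obtain ⟨g₀, hg₀0, hg₀1, hg₀le⟩ := Stmt15Aux.exists_sep hC₀ hK₀.isClosed hdisj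
      refine ⟨g₀.compContinuous ⟨proj, hproj⟩, fun x hx => ?_, ?_⟩
      · exact hg₀1 (proj x) (Set.mem_image_of_mem proj hx)
      · have heqn : (fun n => ∫⁻ x, ((g₀.compContinuous ⟨proj, hproj⟩) x : ℝ≥0∞)
              ∂(νc n : Measure (Ξ × Ξ))) =
            fun n => ∫⁻ y, (g₀ y : ℝ≥0∞) ∂(μseq n : Measure Ξ) := by
          funext n
          have hg₀meas : Measurable fun y : Ξ => (g₀ y : ℝ≥0∞) :=
            measurable_coe_nnreal_ennreal.comp g₀.continuous.measurable
          rw [← hmap n, lintegral_map hg₀meas hproj.measurable]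
          rfl
        have hten : Tendsto (fun n => ∫⁻ y, (g₀ y : ℝ≥0∞) ∂(μseq n : Measure Ξ)) (𝒰 : Filter ℕ)
            (𝓝 (∫⁻ y, (g₀ y : ℝ≥0∞) ∂(μlim : Measure Ξ))) :=
          (ProbabilityMeasure.tendsto_iff_forall_lintegral_tendsto.mp hseq g₀).mono_left h𝒰le
        rw [heqn, hten.limsup_eq]
        exact Stmt15Aux.lintegral_le_of_le_one_of_zero_on g₀ hC₀.measurableSet hg₀0 hg₀le
    have h1 : (μlim : Measure Ξ) C₀ + μ0 (proj ⁻¹' C₀)ᶜ ≤ μ0 (proj ⁻¹' C₀) + μ0 (proj ⁻¹' C₀)ᶜ := by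
      calc (μlim : Measure Ξ) C₀ + μ0 (proj ⁻¹' C₀)ᶜ
          ≤ (μlim : Measure Ξ) C₀ + (μlim : Measure Ξ) C₀ᶜ := add_le_add_right hCc _
        _ = 1 := by rw [measure_add_measure_compl hC₀.measurableSet, measure_univ]
        _ = μ0 (proj ⁻¹' C₀) + μ0 (proj ⁻¹' C₀)ᶜ := by
            rw [measure_add_measure_compl hCclosed.measurableSet, measure_univ]
    exact (ENNReal.add_le_add_iff_right (measure_ne_top μ0 _)).mp h1
  exact ⟨⟨μ0, hμ0prob⟩, hmar Prod.fst continuous_fst μ₁ μ₁n h₁ hνc1,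
    hmar Prod.snd continuous_snd μ₂ μ₂n h₂ hνc2, hFfull⟩
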